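/- Let μ be a deficient topological measure on a locally compact Hausdorff space X, f a bounded continuous function with f(X) ⊆ [a,b], and V an open set with μ(V) < ∞. If inf{ μ(U ∩ V) : U open, Z(f) ⊆ U } = μ(V), where Z(f) = {x ∈ X : f(x) = 0}, then ∫_V f dμ = 0, i.e., aμ(V) + ∫_a^b μ(V ∩ f⁻¹((t,∞))) dt = 0. -/

import Mathlib

open MeasureTheory Set Filter Topology ENNReal

/-- A deficient topological measure on a topological space `X`: a set function with values in
`[0,∞]` (recorded on all sets, but constrained only on open and closed sets) that is finitely
additive on disjoint compact sets, inner regular on open sets with respect to compact sets,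
and outer regular on closed sets with respect to open sets. -/
structure DeficientTopologicalMeasure (X : Type*) [TopologicalSpace X] where
  m : Set X → ℝ≥0∞
  additive : ∀ ⦃C K : Set X⦄, IsCompact C → IsCompact K → Disjoint C K →
    m (C ∪ K) = m C + m K
  innerRegular : ∀ ⦃U : Set X⦄, IsOpen U →
    m U = ⨆ (K : Set X) (_ : IsCompact K) (_ : K ⊆ U), m K
  outerRegular : ∀ ⦃F : Set X⦄, IsClosed F →
    m F = ⨅ (U : Set X) (_ : IsOpen U) (_ : F ⊆ U), m U

namespace DTMaux

variable {X : Type*} [TopologicalSpace X] (μ : DeficientTopologicalMeasure X)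

lemma compact_le {K W : Set X} (hK : IsCompact K) (hW : IsOpen W) (hKW : K ⊆ W) :
    μ.m K ≤ μ.m W := by
  rw [μ.innerRegular hW]
  exact le_iSup_of_le K (le_iSup_of_le hK (le_iSup_of_le hKW le_rfl))

lemma mono_open {U W : Set X} (hU : IsOpen U) (hW : IsOpen W) (hUW : U ⊆ W) :
    μ.m U ≤ μ.m W := by
  rw [μ.innerRegular hU]
  refine iSup_le fun K => iSup_le fun hK => iSup_le fun hKU => ?_
  exact compact_le μ hK hW (hKU.trans hUW)

end DTMaux

/-- Let `μ` be a deficient topological measure on a locally compact Hausdorff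
space, `f` bounded continuous with `f(X) ⊆ [a,b]`, and `V` open with `μ(V) < ∞`. If
`μ_V(Z(f)) = inf{μ(U ∩ V) : U open, Z(f) ⊆ U}` equals `μ(V)`, then `∫_V f dμ = 0`. -/
theorem stmt14 {X : Type*} [TopologicalSpace X] [LocallyCompactSpace X] [T2Space X]
    (μ : DeficientTopologicalMeasure X)
    (f : X → ℝ) (hf : Continuous f) (a b : ℝ) (hfab : ∀ x, f x ∈ Icc a b)
    (V : Set X) (hV : IsOpen V) (hVfin : μ.m V < ∞)
    (hZ : (⨅ (U : Set X) (_ : IsOpen U) (_ : f ⁻¹' {0} ⊆ U), μ.m (U ∩ V)) = μ.m V) :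
    a * (μ.m V).toReal + (∫ t in a..b, (μ.m (V ∩ f ⁻¹' (Ioi t))).toReal) = 0 := by
  have hOt : ∀ t : ℝ, IsOpen (V ∩ f ⁻¹' (Ioi t)) := fun t =>
    hV.inter (isOpen_Ioi.preimage hf)
  -- monotonicity bound
  have hle : ∀ t : ℝ, μ.m (V ∩ f ⁻¹' (Ioi t)) ≤ μ.m V := fun t =>
    DTMaux.mono_open μ (hOt t) hV inter_subset_left
  -- key lower bound from hZ
  have hinf : ∀ (U : Set X), IsOpen U → f ⁻¹' {0} ⊆ U → μ.m V ≤ μ.m (U ∩ V) := by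
    intro U hU hZU
    rw [← hZ]
    exact iInf_le_of_le U (iInf_le_of_le hU (iInf_le _ hZU))
  -- (B) for t < 0
  have hBneg : ∀ t : ℝ, t < 0 → μ.m (V ∩ f ⁻¹' (Ioi t)) = μ.m V := by
    intro t ht
    refine le_antisymm (hle t) ?_
    have := hinf (f ⁻¹' (Ioi t)) (isOpen_Ioi.preimage hf)
      (fun x hx => by simp only [mem_preimage, mem_singleton_iff] at hx; simpa [hx] using ht)
    rwa [inter_comm] at this
  -- (C) for t > 0 : measure zero
  have hCpos : ∀ t : ℝ, 0 < t → μ.m (V ∩ f ⁻¹' (Ioi t)) = 0 := by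
    intro t ht
    rw [μ.innerRegular (hOt t)]
    refine le_antisymm (iSup_le fun K => iSup_le fun hK => iSup_le fun hKU => ?_) (zero_le)
    -- show μ K = 0 for compact K ⊆ V ∩ {f > t}
    have hKV : K ⊆ V := hKU.trans inter_subset_left
    have hKc : IsClosed K := hK.isClosed
    have hU' : IsOpen Kᶜ := hKc.isOpen_compl
    have hZU' : f ⁻¹' {0} ⊆ Kᶜ := by
      intro x hx hxK
      have := hKU hxK
      simp only [mem_inter_iff, mem_preimage, mem_Ioi] at this
      simp only [mem_preimage, mem_singleton_iff] at hx
      linarith [this.2]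
    have hKfin : μ.m K ≤ μ.m V := DTMaux.compact_le μ hK hV hKV
    -- μ (Kᶜ ∩ V) ≤ μ V - μ K
    have h1 : μ.m (Kᶜ ∩ V) ≤ μ.m V - μ.m K := by
      rw [μ.innerRegular (hU'.inter hV)]
      refine iSup_le fun K₁ => iSup_le fun hK₁ => iSup_le fun hK₁U => ?_
      have hdisj : Disjoint K₁ K := by
        refine disjoint_left.mpr fun x hx1 hx2 => ?_
        exact (hK₁U hx1).1 hx2
      have hadd : μ.m K₁ + μ.m K = μ.m (K₁ ∪ K) := (μ.additive hK₁ hK hdisj).symm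
      have hun : μ.m (K₁ ∪ K) ≤ μ.m V :=
        DTMaux.compact_le μ (hK₁.union hK) hV
          (union_subset ((hK₁U.trans inter_subset_right)) hKV)
      exact ENNReal.le_sub_of_add_le_right (hKfin.trans_lt hVfin).ne (hadd ▸ hun)
    have h2 : μ.m V ≤ μ.m V - μ.m K := (hinf Kᶜ hU' hZU').trans h1
    have h3 : μ.m V + μ.m K ≤ μ.m V + 0 := by
      calc μ.m V + μ.m K ≤ (μ.m V - μ.m K) + μ.m K := add_le_add_left h2 _
        _ = μ.m V := tsub_add_cancel_of_le hKfin
        _ = μ.m V + 0 := (add_zero _).symm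
    exact ENNReal.le_of_add_le_add_left hVfin.ne h3
  set g : ℝ → ℝ := fun t => (μ.m (V ∩ f ⁻¹' (Ioi t))).toReal with hg
  by_cases h0 : μ.m V = 0
  · have hz : ∀ t, g t = 0 := fun t => by
      simp [hg, le_antisymm ((hle t).trans h0.le) (zero_le)]
    have hgz : g = fun _ => (0:ℝ) := funext hz
    rw [hgz]
    simp [h0]
  -- Z(f) nonempty
  have hZne : ∃ x, f x = 0 := by
    by_contra hne
    push_neg at hne
    have hempty : f ⁻¹' {0} = (∅ : Set X) := by
      ext x; simp [hne x]
    have := hinf ∅ isOpen_empty (by simp [hempty])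
    rw [empty_inter] at this
    -- μ ∅ = 0
    have hselfe : μ.m (∅ : Set X) = μ.m ∅ + μ.m ∅ := by
      simpa using μ.additive isCompact_empty isCompact_empty (disjoint_bot_left)
    have hefin : μ.m (∅ : Set X) < ∞ :=
      ((DTMaux.mono_open μ isOpen_empty hV (empty_subset _)).trans_lt hVfin)
    have he0 : μ.m (∅ : Set X) = 0 := by
      have := ENNReal.le_of_add_le_add_left hefin.ne
        (by rw [← hselfe, add_zero] : μ.m (∅:Set X) + μ.m ∅ ≤ μ.m ∅ + 0)
      exact le_antisymm this (zero_le)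
    exact h0 (le_antisymm (this.trans he0.le) (zero_le))
  obtain ⟨x₀, hx₀⟩ := hZne
  have hab : a ≤ 0 ∧ 0 ≤ b := by
    have := hfab x₀; rw [hx₀] at this; exact ⟨this.1, this.2⟩
  set c : ℝ := (μ.m V).toReal with hc
  have haene : ∀ᵐ t : ℝ, t ≠ 0 := by
    refine ae_iff.mpr ?_
    simpa using Real.volume_singleton (a := 0)
  have hint1 : IntervalIntegrable g volume a 0 := by
    refine (intervalIntegrable_const (c := c)).congr_ae ?_
    rw [uIoc_of_le hab.1]
    refine (ae_restrict_iff' measurableSet_Ioc).mpr ?_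
    filter_upwards [haene] with t ht htmem
    have htneg : t < 0 := lt_of_le_of_ne htmem.2 ht
    simp [hg, hBneg t htneg, hc]
  have hint2 : IntervalIntegrable g volume 0 b := by
    refine (intervalIntegrable_const (c := (0:ℝ))).congr_ae ?_
    rw [uIoc_of_le hab.2]
    refine (ae_restrict_iff' measurableSet_Ioc).mpr ?_
    refine Eventually.of_forall fun t htmem => ?_
    simp [hg, hCpos t htmem.1]
  have hsplit : (∫ t in a..(0:ℝ), g t) + (∫ t in (0:ℝ)..b, g t) = ∫ t in a..b, g t :=
    intervalIntegral.integral_add_adjacent_intervals hint1 hint2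
  have hval1 : (∫ t in a..(0:ℝ), g t) = -a * c := by
    rw [show (∫ t in a..(0:ℝ), g t) = ∫ t in a..(0:ℝ), c from ?_]
    · rw [intervalIntegral.integral_const, smul_eq_mul]; ring
    refine intervalIntegral.integral_congr_ae ?_
    rw [uIoc_of_le hab.1]
    filter_upwards [haene] with t ht htmem
    have htneg : t < 0 := lt_of_le_of_ne htmem.2 ht
    simp [hg, hBneg t htneg, hc]
  have hval2 : (∫ t in (0:ℝ)..b, g t) = 0 := by
    rw [show (∫ t in (0:ℝ)..b, g t) = ∫ t in (0:ℝ)..b, (0:ℝ) from ?_]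
    · simp
    refine intervalIntegral.integral_congr_ae ?_
    rw [uIoc_of_le hab.2]
    refine Eventually.of_forall fun t htmem => ?_
    simp [hg, hCpos t htmem.1]
  rw [← hsplit, hval1, hval2]
  ring
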